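/- Let N, L, Q be positive integers with Q ≥ N + L - 1, and let (n₀, n₁, n₂) be (N, Q, L) sorted in nondecreasing order. Then for every integer r with 0 ≤ r ≤ n₀, one has [n₀ + n₁ - n₂ - r]⁺ ≤ 1, so that ⌊([n₀ + n₁ - n₂ - r]⁺)²/4⌋ = 0 and hence the DMT d(r) = (n₀ - r)(n₁ - r) depends only on min(N,L) and the middle order statistic. -/
import Mathlib


/-- if Q ≥ N + L - 1 and (n₀,n₁,n₂) is (N,Q,L) sorted nondecreasingly,
then for every 0 ≤ r ≤ n₀ the correction term vanishes, so the DMT equals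
(n₀-r)(n₁-r); moreover n₀ = min N L. -/
theorem dmt_reduces_to_NL (N L Q n₀ n₁ n₂ : ℤ) (hN : 1 ≤ N) (hL : 1 ≤ L) (hQ : 1 ≤ Q)
    (hQ' : Q ≥ N + L - 1) (hperm : ({n₀, n₁, n₂} : Multiset ℤ) = {N, Q, L})
    (h1 : n₀ ≤ n₁) (h2 : n₁ ≤ n₂) :
    n₀ = min N L ∧
    ∀ r : ℤ, 0 ≤ r → r ≤ n₀ →
      max 0 (n₀ + n₁ - n₂ - r) ≤ 1 ∧
      (max 0 (n₀ + n₁ - n₂ - r)) ^ 2 / 4 = 0 ∧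
      (n₀ - r) * (n₁ - r) - (max 0 (n₀ + n₁ - n₂ - r)) ^ 2 / 4 = (n₀ - r) * (n₁ - r) := by
  have hsum : n₀ + n₁ + n₂ = N + Q + L := by
    have := congrArg Multiset.sum hperm
    simp at this; omega
  have hmemN : N ∈ ({n₀, n₁, n₂} : Multiset ℤ) := by rw [hperm]; simp
  have hmemL : L ∈ ({n₀, n₁, n₂} : Multiset ℤ) := by rw [hperm]; simp
  have hmemQ : Q ∈ ({n₀, n₁, n₂} : Multiset ℤ) := by rw [hperm]; simp
  have hmem0 : n₀ ∈ ({N, Q, L} : Multiset ℤ) := by rw [← hperm]; simp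
  simp at hmemN hmemL hmemQ hmem0
  have hQn₂ : Q ≤ n₂ := by omega
  have hmin : n₀ = min N L := by
    rcases min_cases N L with ⟨h, _⟩ | ⟨h, _⟩ <;> rw [h] <;> omega
  refine ⟨hmin, fun r hr hrn => ?_⟩
  have hx1 : max 0 (n₀ + n₁ - n₂ - r) ≤ 1 := by omega
  have hx0 : 0 ≤ max 0 (n₀ + n₁ - n₂ - r) := le_max_left _ _
  set x := max 0 (n₀ + n₁ - n₂ - r) with hxdef
  have hdiv : x ^ 2 / 4 = 0 := by interval_cases x <;> norm_num
  exact ⟨hx1, hdiv, by omega⟩
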